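/- Let b ≥ 2 and k ≥ 2, and let a_k = (b^k - 1)/(b^2 - 1) + ((1 - (-1)^k)/2)·(b/(b+1)). Then a_k is a positive integer lying in [b^{k-2}, b^{k-1}), s_b(a_k) = F_k, and a_k is the smallest n in [b^{k-2}, b^{k-1}) with s_b(n) = F_k. -/

import Mathlib

def IsSb (b : ℕ) (s : ℕ → ℕ) : Prop :=
  s 0 = 0 ∧ s 1 = 1 ∧
  ∀ n : ℕ, s (b * n) = s n ∧ s (b * n + 1) = s n + s (n + 1) ∧
    ∀ i : ℕ, 2 ≤ i → i ≤ b - 1 → s (b * n + i) = s (n + 1)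

namespace Stmt7Aux
open Nat

def aa (b : ℕ) : ℕ → ℕ
  | 0 => 0
  | 1 => 1
  | k+2 => b^k + aa b k

def cc (b : ℕ) : ℕ → ℕ
  | 0 => 1
  | 1 => b
  | m+2 => b^(m+2) + cc b m

variable {b : ℕ} {s : ℕ → ℕ}

lemma aa_lt (hb : 2 ≤ b) : ∀ k, aa b k < b ^ k := by
  intro k
  induction k using Nat.twoStepInduction with
  | zero => simp [aa]
  | one => simpa [aa] using (show 1 < b by omega)
  | more k ih _ =>
    have h1 : b^k + aa b k < 2 * b^k := by omega
    have h2 : 2 * b^k ≤ b^(k+2) := by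
      have : b^(k+2) = b^2 * b^k := by ring
      have h4 : 4 ≤ b^2 := by nlinarith
      nlinarith [pow_pos (show 0 < b by omega) k]
    calc aa b (k+2) = b^k + aa b k := rfl
      _ < 2 * b^k := h1
      _ ≤ b^(k+2) := h2

lemma aa_ge (hb : 2 ≤ b) (m : ℕ) : b ^ m ≤ aa b (m+2) := by
  show b^m ≤ b^m + aa b m; omega

lemma aa_ub (hb : 2 ≤ b) (m : ℕ) : aa b (m+2) < b ^ (m+1) := by
  have h1 := aa_lt hb m
  have h2 : 2 * b^m ≤ b * b^m := Nat.mul_le_mul_right _ hb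
  have h3 : b * b^m = b^(m+1) := by ring
  show b^m + aa b m < b^(m+1)
  omega

lemma cc_ge (hb : 2 ≤ b) : ∀ m, b ^ m ≤ cc b m := by
  intro m
  induction m using Nat.twoStepInduction with
  | zero => simp [cc]
  | one => simp [cc]
  | more m ih _ => show b^(m+2) ≤ b^(m+2) + cc b m; omega

lemma cc_lt (hb : 2 ≤ b) : ∀ m, cc b m < b ^ (m+1) := by
  intro m
  induction m using Nat.twoStepInduction with
  | zero => simpa [cc] using (show 1 < b by omega)
  | one =>
    show b < b^2
    nlinarith
  | more m ih _ =>
    show b^(m+2) + cc b m < b^(m+3)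
    have h1 : b^(m+3) = b^2 * b^(m+1) := by ring
    have h2 : b^(m+2) = b * b^(m+1) := by ring
    have h4 : 4 ≤ b^2 := by nlinarith
    nlinarith [pow_pos (show 0 < b by omega) (m+1)]

lemma l5 : ∀ m, cc b (m+1) = b * cc b m + m % 2 := by
  intro m
  induction m using Nat.twoStepInduction with
  | zero => simp [cc]
  | one => show b^2 + cc b 0 = b * b + 1 % 2; simp [cc]; ring
  | more m ih _ =>
    show b^(m+3) + cc b (m+1) = b * cc b (m+2) + (m+2) % 2
    rw [ih]
    show b^(m+3) + (b * cc b m + m % 2) = b * (b^(m+2) + cc b m) + (m+2) % 2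
    rw [Nat.mul_add]
    have h3 : b * b^(m+2) = b^(m+3) := by ring
    have h2 : (m+2) % 2 = m % 2 := by omega
    omega

lemma l6 : ∀ m, aa b (m+2) = cc b m + m % 2 := by
  intro m
  induction m using Nat.twoStepInduction with
  | zero => simp [aa, cc]
  | one => simp [aa, cc]
  | more m ih _ =>
    show b^(m+2) + aa b (m+2) = cc b (m+2) + (m+2) % 2
    rw [ih]
    show b^(m+2) + (cc b m + m % 2) = b^(m+2) + cc b m + (m+2) % 2
    omega

lemma l3 (m : ℕ) : aa b (m+3) = b * cc b m + 1 := by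
  have h1 : aa b (m+3) = cc b (m+1) + (m+1) % 2 := l6 (m+1)
  rw [h1, l5 m]
  omega

lemma l4 (hb : 2 ≤ b) (m : ℕ) : cc b (m+1) ≤ b * aa b (m+2) := by
  rw [l5 m, l6 m, Nat.mul_add]
  have : m % 2 ≤ b * (m % 2) := Nat.le_mul_of_pos_left _ (by omega)
  omega

lemma l7 (m : ℕ) : cc b (m+1) ≤ b * cc b m + 1 := by
  rw [l5 m]; omega


lemma ssmall (hb : 2 ≤ b) (hs : IsSb b s) : ∀ n, 1 ≤ n → n ≤ b → s n = 1 := by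
  obtain ⟨hs0, hs1, hsr⟩ := hs
  intro n h1 h2
  rcases eq_or_lt_of_le h1 with h | h
  · rw [← h]; exact hs1
  rcases eq_or_lt_of_le h2 with h' | h'
  · rw [h']
    have := (hsr 1).1
    simpa [hs1] using this
  · have := (hsr 0).2.2 n h (by omega)
    simpa [hs1] using this

lemma spow (hs : IsSb b s) : ∀ m, s (b^m) = 1 := by
  intro m
  induction m with
  | zero => simpa using hs.2.1
  | succ m ih =>
    have : b^(m+1) = b * b^m := by ring
    rw [this, (hs.2.2 (b^m)).1, ih]

lemma sV (hb : 2 ≤ b) (hs : IsSb b s) :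
    ∀ m, s (cc b m) = fib (m + 2 - m % 2) ∧ s (cc b m + 1) = fib (m + 1 + m % 2) := by
  obtain ⟨hs0, hs1, hsr⟩ := hs
  intro m
  induction m with
  | zero =>
    constructor
    · show s 1 = fib 2; rw [hs1]; rfl
    · show s 2 = fib 1
      rw [Nat.fib_one]
      rcases eq_or_lt_of_le hb with h | h
      · have h2 := (hsr 1).1
        rw [← h] at h2
        norm_num at h2
        rw [h2, hs1]
      · have := (hsr 0).2.2 2 (le_refl 2) (by omega)
        simpa [hs1] using this
  | succ m ih =>
    obtain ⟨ih1, ih2⟩ := ih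
    have hF : fib (m+3) = fib (m+1) + fib (m+2) := by
      rw [show m+3 = m+1+2 from by omega]; exact Nat.fib_add_two
    rcases Nat.even_or_odd m with hm | hm
    · -- m even : s(cc m) = fib (m+2), s(cc m+1) = fib (m+1)
      have hm2 : m % 2 = 0 := Nat.even_iff.mp hm
      have hi1 : s (cc b m) = fib (m+2) := by
        rw [ih1]; congr 1; omega
      have hi2 : s (cc b m + 1) = fib (m+1) := by
        rw [ih2]; congr 1; omega
      have hc : cc b (m+1) = b * cc b m := by rw [l5 m, hm2]; omega
      rw [hc]
      constructor
      · rw [(hsr (cc b m)).1, hi1]; congr 1; omega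
      · rw [(hsr (cc b m)).2.1, hi1, hi2,
          show m + 1 + 1 + (m+1) % 2 = m + 3 from by omega]
        omega
    · -- m odd
      have hm2 : m % 2 = 1 := Nat.odd_iff.mp hm
      have hi1 : s (cc b m) = fib (m+1) := by rw [ih1]; congr 1; omega
      have hi2 : s (cc b m + 1) = fib (m+2) := by rw [ih2]; congr 1; omega
      have hc : cc b (m+1) = b * cc b m + 1 := by rw [l5 m, hm2]
      rw [hc]
      constructor
      · rw [(hsr (cc b m)).2.1, hi1, hi2,
          show m + 1 + 2 - (m+1) % 2 = m + 3 from by omega]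
        omega
      · rw [show m + 1 + 1 + (m+1) % 2 = m + 2 from by omega]
        have e : b * cc b m + 1 + 1 = b * cc b m + 2 := rfl
        rw [e]
        rcases eq_or_lt_of_le hb with h | h
        · -- b = 2
          have e2 : b * cc b m + 2 = b * (cc b m + 1) := by rw [← h]; ring
          rw [e2, (hsr (cc b m + 1)).1, hi2]
        · rw [(hsr (cc b m)).2.2 2 (le_refl 2) (by omega), hi2]


lemma bound (hb : 2 ≤ b) (hs : IsSb b s) :
    ∀ m, ∀ n, b^m ≤ n → n < b^(m+1) →
    (s n ≤ fib (m+2) ∧ (s n = fib (m+2) → aa b (m+2) ≤ n)) ∧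
    (s n + s (n+1) ≤ fib (m+3) ∧ (s n + s (n+1) = fib (m+3) → cc b m ≤ n)) := by
  intro m
  induction m with
  | zero =>
    intro n h1 h2
    show (s n ≤ fib 2 ∧ (s n = fib 2 → aa b 2 ≤ n)) ∧
      (s n + s (n+1) ≤ fib 3 ∧ (s n + s (n+1) = fib 3 → cc b 0 ≤ n))
    have h1' : 1 ≤ n := by simpa using h1
    have h2' : n < b := by
      have : b^(0+1) = b := by ring
      omega
    have e1 : s n = 1 := ssmall hb hs n h1' (by omega)
    have e2 : s (n+1) = 1 := ssmall hb hs (n+1) (by omega) (by omega)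
    have ha : aa b 2 = 1 := by show b^0 + aa b 0 = 1; simp [aa]
    have hc : cc b 0 = 1 := rfl
    have f2 : fib 2 = 1 := rfl
    have f3 : fib 3 = 2 := rfl
    refine ⟨⟨?_, fun _ => ?_⟩, ?_, fun _ => ?_⟩ <;> omega
  | succ m ih =>
    intro n h1 h2
    show (s n ≤ fib (m+3) ∧ (s n = fib (m+3) → aa b (m+3) ≤ n)) ∧
      (s n + s (n+1) ≤ fib (m+4) ∧ (s n + s (n+1) = fib (m+4) → cc b (m+1) ≤ n))
    have h2' : n < b^(m+2) := h2
    obtain ⟨hs0, hs1, hsr⟩ := hs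
    have hbpos : 0 < b := by omega
    obtain ⟨q, r, hr, hnq⟩ : ∃ q r, r < b ∧ n = b * q + r :=
      ⟨n / b, n % b, Nat.mod_lt _ hbpos, ((Nat.div_add_mod n b).symm)⟩
    have hp1 : b * b^(m+1) = b^(m+2) := by ring
    have hp0 : b * b^m = b^(m+1) := by ring
    have hq2 : q < b^(m+1) := by
      have h3 : b * q < b * b^(m+1) := by omega
      exact Nat.lt_of_mul_lt_mul_left h3
    have hq1 : b^m ≤ q := by
      have h3 : b * b^m < b * (q + 1) := by
        have : b * (q+1) = b * q + b := by ring
        omega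
      have := Nat.lt_of_mul_lt_mul_left h3
      omega
    have IHq := ih q hq1 hq2
    have hsq1 : s (q+1) ≤ fib (m+2) := by
      rcases eq_or_lt_of_le (show q + 1 ≤ b^(m+1) from hq2) with he | hl
      · rw [he, spow ⟨hs0, hs1, hsr⟩]
        exact Nat.fib_pos.mpr (by omega)
      · exact ((ih (q+1) (by omega) hl).1).1
    have hF3 : fib (m+3) = fib (m+1) + fib (m+2) := by
      rw [show m+3 = m+1+2 from by omega]; exact Nat.fib_add_two
    have hF4 : fib (m+4) = fib (m+2) + fib (m+3) := by
      rw [show m+4 = m+2+2 from by omega]; exact Nat.fib_add_two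
    have hflt : fib (m+2) < fib (m+3) := Nat.fib_lt_fib_succ (by omega)
    have hfpos : 0 < fib (m+2) := Nat.fib_pos.mpr (by omega)
    rcases Nat.lt_or_ge r 2 with hr2 | hr2
    · rcases Nat.lt_or_ge r 1 with hr0 | hr1
      · -- r = 0
        have hr0' : r = 0 := by omega
        have hbq : n = b * q := by omega
        have e1 : s n = s q := by rw [hbq, (hsr q).1]
        have e2 : s (n+1) = s q + s (q+1) := by
          rw [show n + 1 = b * q + 1 from by omega, (hsr q).2.1]
        refine ⟨⟨by omega, fun hcon => ?_⟩, ⟨by omega, fun hcon => ?_⟩⟩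
        · exact absurd hcon (by omega)
        · have hq' : s q = fib (m+2) := by omega
          have h5 : aa b (m+2) ≤ q := IHq.1.2 hq'
          have h7 : b * aa b (m+2) ≤ b * q := Nat.mul_le_mul_left _ h5
          have h8 := l4 hb m
          omega
      · -- r = 1
        have hr1' : r = 1 := by omega
        have e1 : s n = s q + s (q+1) := by
          rw [show n = b * q + 1 from by omega, (hsr q).2.1]
        have e2 : s (n+1) = s (q+1) := by
          rcases eq_or_lt_of_le hb with h | h
          · rw [show n + 1 = b * (q+1) from by rw [← h] at hnq hr ⊢; omega,
              (hsr (q+1)).1]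
          · rw [show n + 1 = b * q + 2 from by omega,
              (hsr q).2.2 2 (le_refl 2) (by omega)]
        refine ⟨⟨by omega, fun hcon => ?_⟩, ⟨by omega, fun hcon => ?_⟩⟩
        · have h5 : cc b m ≤ q := IHq.2.2 (by omega)
          have h6 : b * cc b m ≤ b * q := Nat.mul_le_mul_left _ h5
          have h7 := l3 (b := b) m
          omega
        · have hsum : s q + s (q+1) = fib (m+3) := by omega
          have h5 : cc b m ≤ q := IHq.2.2 hsum
          have h6 : b * cc b m ≤ b * q := Nat.mul_le_mul_left _ h5
          have h7 := l7 (b := b) m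
          omega
    · -- 2 ≤ r ≤ b-1
      have e1 : s n = s (q+1) := by
        rw [hnq, (hsr q).2.2 r hr2 (by omega)]
      have e2 : s (n+1) = s (q+1) := by
        rcases Nat.lt_or_ge (r+1) b with h | h
        · rw [show n + 1 = b * q + (r+1) from by omega,
            (hsr q).2.2 (r+1) (by omega) (by omega)]
        · rw [show n + 1 = b * (q+1) from by
            have : b * (q+1) = b * q + b := by ring
            omega, (hsr (q+1)).1]
      refine ⟨⟨by omega, fun hcon => absurd hcon (by omega)⟩,
        ⟨by omega, fun hcon => absurd hcon (by omega)⟩⟩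


lemma ratId (hb : 2 ≤ b) : ∀ k, (aa b k : ℚ) =
    ((b : ℚ) ^ k - 1) / ((b : ℚ) ^ 2 - 1)
      + ((1 - (-1 : ℚ) ^ k) / 2) * ((b : ℚ) / ((b : ℚ) + 1)) := by
  have hb1 : (1:ℚ) < (b:ℚ) := by exact_mod_cast by omega
  have h1 : (b:ℚ) + 1 ≠ 0 := by nlinarith
  have h2 : (b:ℚ) ^ 2 - 1 ≠ 0 := by nlinarith
  have h3 : (b:ℚ) - 1 ≠ 0 := by nlinarith
  intro k
  induction k using Nat.twoStepInduction with
  | zero => simp [aa]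
  | one =>
    show ((1:ℕ) : ℚ) = _
    push_cast
    field_simp
    ring
  | more k ih _ =>
    show ((b^k + aa b k : ℕ) : ℚ) = _
    push_cast
    rw [ih]
    have e : (-1 : ℚ) ^ (k+2) = (-1:ℚ)^k := by ring
    rw [e]
    field_simp
    ring


lemma sA (hb : 2 ≤ b) (hs : IsSb b s) (m : ℕ) : s (aa b (m+2)) = fib (m+2) := by
  have hV := sV hb hs m
  rw [l6 m]
  rcases Nat.even_or_odd m with hm | hm
  · have hm2 : m % 2 = 0 := Nat.even_iff.mp hm
    rw [hm2]
    have := hV.1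
    rw [hm2] at this
    simpa using this
  · have hm2 : m % 2 = 1 := Nat.odd_iff.mp hm
    rw [hm2]
    have := hV.2
    rw [hm2] at this
    simpa using this

end Stmt7Aux

open Stmt7Aux in
/-- a_k = (b^k-1)/(b^2-1) + ((1-(-1)^k)/2)·b/(b+1) is a positive integer in
[b^{k-2}, b^{k-1}), s_b(a_k) = F_k, and it is the smallest such n with s_b(n) = F_k. -/
theorem stmt7 (b k : ℕ) (hb : 2 ≤ b) (hk : 2 ≤ k) (s : ℕ → ℕ) (hs : IsSb b s) :
    ∃ a : ℕ,
      (a : ℚ) = ((b : ℚ) ^ k - 1) / ((b : ℚ) ^ 2 - 1)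
          + ((1 - (-1 : ℚ) ^ k) / 2) * ((b : ℚ) / ((b : ℚ) + 1)) ∧
      0 < a ∧ b ^ (k - 2) ≤ a ∧ a < b ^ (k - 1) ∧ s a = Nat.fib k ∧
      ∀ n : ℕ, b ^ (k - 2) ≤ n → n < b ^ (k - 1) → s n = Nat.fib k → a ≤ n := by
  obtain ⟨m, rfl⟩ : ∃ m, k = m + 2 := ⟨k - 2, by omega⟩
  have e1 : m + 2 - 2 = m := by omega
  have e2 : m + 2 - 1 = m + 1 := by omega
  rw [e1, e2]
  have hge := aa_ge hb m
  have hub := aa_ub hb m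
  have hpow : 0 < b ^ m := pow_pos (by omega) m
  refine ⟨aa b (m+2), ratId hb (m+2), by omega, hge, hub, sA hb hs m, ?_⟩
  intro n hn1 hn2 hsn
  exact ((bound hb hs m n hn1 hn2).1).2 hsn
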